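/- Key computation in the triviality of ξ on stabilizers: with notation as above, ξ_λ(τ_{u_1}τ_{u_2}) = (d(V')·d(V), λ)_{F} = (-λ, λ)_F = 1, where d(V')·d(V) lies in the square class of -λ. -/

import Mathlib

open Classical in
/-- The Hilbert symbol of `a, b ∈ F^×`: it is `1` if `z² - a x² - b y² = 0` has a
nonzero solution `(x, y, z) ∈ F³`, and `-1` otherwise. -/
noncomputable def hilbertSymbol (F : Type*) [Field F] (a b : F) : ℤ :=
  if ∃ x y z : F, (x, y, z) ≠ (0, 0, 0) ∧ z ^ 2 - a * x ^ 2 - b * y ^ 2 = 0 then 1 else -1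

private lemma hilbertSymbol_sq_mul (F : Type*) [Field F] (a b c : F) (hc : c ≠ 0) :
    hilbertSymbol F (a * c ^ 2) b = hilbertSymbol F a b := by
  unfold hilbertSymbol
  congr 1
  apply propext
  constructor
  · rintro ⟨x, y, z, hne, h⟩
    refine ⟨c * x, y, z, ?_, ?_⟩
    · intro h0
      apply hne
      simp only [Prod.mk.injEq] at h0 ⊢
      exact ⟨by rcases mul_eq_zero.mp h0.1 with h'|h' <;> simp_all, h0.2.1, h0.2.2⟩
    · rw [← h]; ring
  · rintro ⟨x, y, z, hne, h⟩
    refine ⟨x / c, y, z, ?_, ?_⟩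
    · intro h0
      apply hne
      simp only [Prod.mk.injEq] at h0 ⊢
      exact ⟨by have := h0.1; field_simp at this; simpa using this, h0.2.1, h0.2.2⟩
    · rw [← h]; field_simp

private lemma hilbertSymbol_neg_self (F : Type*) [Field F] (b : F) :
    hilbertSymbol F (-b) b = 1 := by
  unfold hilbertSymbol
  rw [if_pos ⟨1, 1, 0, by simp, by ring⟩]

/-- Key computation in the triviality of `ξ` on stabilizers: with `u₁, u₂` orthogonal vectors
spanning the complement of `v̄^β`, the spinor norm of `τ_{u₁} τ_{u₂}` is
`q(u₁) q(u₂) = d(V')·d(V)` mod squares, so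
`ξ_λ(τ_{u₁} τ_{u₂}) = (q(u₁) q(u₂), λ)_F = (d(V')·d(V), λ)_F = (-λ, λ)_F = 1`,
using that `d(V')·d(V)` lies in the square class of `-λ` and the standard Hilbert-symbol
identity `(-λ, λ)_F = 1`. -/
theorem spinor_character_value_eq_one
    (F : Type*) [Field F] [TopologicalSpace F] [IsTopologicalRing F]
    [LocallyCompactSpace F] [T2Space F] (hF : ¬ DiscreteTopology F)
    (hchar : ringChar F ≠ 2)
    (lam : F) (hlam : lam ≠ 0)
    (qu₁ qu₂ dV' dV : F) (hqu₁ : qu₁ ≠ 0) (hqu₂ : qu₂ ≠ 0)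
    (hdV' : dV' ≠ 0) (hdV : dV ≠ 0)
    -- `SN(τ_{u₁} τ_{u₂}) = q(u₁) q(u₂)` lies in the square class of `d(V')·d(V)` …
    (hSN : ∃ c : F, c ≠ 0 ∧ qu₁ * qu₂ = dV' * dV * c ^ 2)
    -- … and `d(V')·d(V)` lies in the square class of `-λ`
    (hsq : ∃ c : F, c ≠ 0 ∧ dV' * dV = -lam * c ^ 2) :
    hilbertSymbol F (qu₁ * qu₂) lam = hilbertSymbol F (dV' * dV) lam ∧
    hilbertSymbol F (dV' * dV) lam = hilbertSymbol F (-lam) lam ∧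
    hilbertSymbol F (-lam) lam = 1 ∧
    hilbertSymbol F (qu₁ * qu₂) lam = 1 := by
  obtain ⟨c₁, hc₁, h₁⟩ := hSN
  obtain ⟨c₂, hc₂, h₂⟩ := hsq
  have e1 : hilbertSymbol F (qu₁ * qu₂) lam = hilbertSymbol F (dV' * dV) lam := by
    rw [h₁, hilbertSymbol_sq_mul F _ _ _ hc₁]
  have e2 : hilbertSymbol F (dV' * dV) lam = hilbertSymbol F (-lam) lam := by
    rw [h₂, hilbertSymbol_sq_mul F _ _ _ hc₂]
  have e3 : hilbertSymbol F (-lam) lam = 1 := hilbertSymbol_neg_self F lam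
  exact ⟨e1, e2, e3, by rw [e1, e2, e3]⟩
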